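/- Let τ be a finite relational signature and let Γ and Δ be valued τ-structures with countable domains and oligomorphic automorphism groups that are fractionally homomorphically equivalent. Then for every τ-expression φ the cost of φ with respect to Γ equals the cost of φ with respect to Δ, both costs are attained, and for every u ∈ ℚ the pair (φ,u) has a solution with respect to Γ if and only if it has a solution with respect to Δ. -/

import Mathlib

open MeasureTheory
open scoped ENNReal NNReal

/-- The value space `ℚ ∪ {∞}`. -/
abbrev QInf : Type := WithTop ℚ

/-- The embedding of `ℚ ∪ {∞}` into the extended reals. -/
noncomputable def QInf.toE (x : QInf) : EReal :=
  WithTop.recTopCoe ⊤ (fun q : ℚ => ((q : ℝ) : EReal)) x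

/-- A relational signature: a collection of relation symbols with arities. -/
structure Signature where
  symbols : Type
  arity : symbols → ℕ

/-- A valued `τ`-structure with domain `C`: each symbol is interpreted as a valued relation. -/
def VStruct (τ : Signature) (C : Type) : Type :=
  ∀ s : τ.symbols, (Fin (τ.arity s) → C) → QInf

/-- An atom `R(x_{i_1},…,x_{i_k})` with variables from `V`. -/
structure SAtom (τ : Signature) (V : Type) where
  sym : τ.symbols
  vars : Fin (τ.arity sym) → V

/-- A `τ`-expression: a finite formal sum of atoms. -/
def Expr (τ : Signature) (V : Type) : Type := List (SAtom τ V)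

/-- Evaluation of a `τ`-expression in a valued structure. -/
def Expr.eval {τ : Signature} {C V : Type} (Γ : VStruct τ C) (φ : Expr τ V)
    (a : V → C) : QInf :=
  (φ.map fun t => Γ t.sym fun i => a (t.vars i)).sum

/-- The product topology on `D → C` where `C` carries the discrete topology. -/
def fnTop (D C : Type) : TopologicalSpace (D → C) :=
  @Pi.topologicalSpace D (fun _ => C) (fun _ => ⊥)

/-- The Borel σ-algebra on `D → C` for the product of discrete topologies. -/
noncomputable def fnBorel (D C : Type) : MeasurableSpace (D → C) :=
  @borel (D → C) (fnTop D C)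

/-- A fractional map from `D` to `C`: a Borel probability measure on `C^D`. -/
def IsFracMap {D C : Type} (ω : @Measure (D → C) (fnBorel D C)) : Prop :=
  @IsProbabilityMeasure (D → C) (fnBorel D C) ω

/-- The positive part of an extended real, as an extended nonnegative real. -/
noncomputable def erealPos (x : EReal) : ℝ≥0∞ :=
  if x = ⊤ then ⊤ else ENNReal.ofReal x.toReal

/-- The `EReal`-valued Lebesgue integral: integral of the positive part minus
integral of the negative part. -/
noncomputable def EIntV {D C : Type} (ω : @Measure (D → C) (fnBorel D C))
    (X : (D → C) → EReal) : EReal :=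
  ((@MeasureTheory.lintegral (D → C) (fnBorel D C) ω fun f => erealPos (X f) : ℝ≥0∞) : EReal)
    - ((@MeasureTheory.lintegral (D → C) (fnBorel D C) ω fun f => erealPos (-X f) : ℝ≥0∞) : EReal)

/-- Existence of the `EReal`-valued Lebesgue integral: the integrand is Borel measurable and
not both the positive and the negative part have infinite integral. -/
def EIntEx {D C : Type} (ω : @Measure (D → C) (fnBorel D C)) (X : (D → C) → EReal) : Prop :=
  (@Measurable (D → C) EReal (fnBorel D C) inferInstance X) ∧
    ((@MeasureTheory.lintegral (D → C) (fnBorel D C) ω fun f => erealPos (X f)) ≠ ⊤ ∨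
      (@MeasureTheory.lintegral (D → C) (fnBorel D C) ω fun f => erealPos (-X f)) ≠ ⊤)

/-- A fractional homomorphism from `Δ` to `Γ`. -/
def IsFracHom {τ : Signature} {D C : Type} (Δ : VStruct τ D) (Γ : VStruct τ C)
    (ω : @Measure (D → C) (fnBorel D C)) : Prop :=
  IsFracMap ω ∧
    ∀ (s : τ.symbols) (a : Fin (τ.arity s) → D),
      EIntEx ω (fun f => QInf.toE (Γ s (f ∘ a))) ∧
        EIntV ω (fun f => QInf.toE (Γ s (f ∘ a))) ≤ QInf.toE (Δ s a)

/-- An automorphism of a valued structure. -/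
def IsVAuto {τ : Signature} {C : Type} (Γ : VStruct τ C) (α : Equiv.Perm C) : Prop :=
  ∀ (s : τ.symbols) (a : Fin (τ.arity s) → C), Γ s (fun i => α (a i)) = Γ s a

/-- The automorphism group of a valued structure is oligomorphic: for each `k` there are
finitely many orbits of `k`-tuples. -/
def VOligo {τ : Signature} {C : Type} (Γ : VStruct τ C) : Prop :=
  ∀ k : ℕ, ∃ F : Set (Fin k → C), F.Finite ∧
    ∀ a : Fin k → C, ∃ b ∈ F, ∃ α : Equiv.Perm C,
      IsVAuto Γ α ∧ (fun i => α (b i)) = a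

/-! ### Auxiliary lemmas -/

section Aux

lemma toE_top : QInf.toE ⊤ = ⊤ := rfl
lemma toE_coe (q : ℚ) : QInf.toE (q : QInf) = ((q:ℝ):EReal) := rfl

lemma toE_ne_bot (x : QInf) : QInf.toE x ≠ ⊥ := by
  induction x using WithTop.recTopCoe with
  | top => simp [toE_top]
  | coe q => simp [toE_coe]

lemma toE_le_toE {x y : QInf} : QInf.toE x ≤ QInf.toE y ↔ x ≤ y := by
  induction x using WithTop.recTopCoe with
  | top =>
    induction y using WithTop.recTopCoe with
    | top => simp
    | coe q => simp [toE_top, toE_coe, top_le_iff, EReal.coe_ne_top]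
  | coe p =>
    induction y using WithTop.recTopCoe with
    | top => simp [toE_top, toE_coe, le_top]
    | coe q => simp [toE_coe, WithTop.coe_le_coe, EReal.coe_le_coe_iff, Rat.cast_le]

lemma toE_add (x y : QInf) : QInf.toE (x + y) = QInf.toE x + QInf.toE y := by
  induction x using WithTop.recTopCoe with
  | top =>
    induction y using WithTop.recTopCoe with
    | top => simp [toE_top]
    | coe q => rw [top_add]; simp [toE_top, toE_coe]
  | coe p =>
    induction y using WithTop.recTopCoe with
    | top => simp [toE_top, toE_coe]
    | coe q =>
      rw [show ((p:QInf) + (q:QInf)) = ((p+q : ℚ) : QInf) by exact_mod_cast rfl]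
      rw [toE_coe, toE_coe, toE_coe, ← EReal.coe_add]
      norm_num

lemma toE_zero : QInf.toE 0 = 0 := by
  rw [show (0:QInf) = ((0:ℚ):QInf) from rfl, toE_coe]; simp

lemma erealPos_top : erealPos ⊤ = ⊤ := rfl
lemma erealPos_bot : erealPos ⊥ = 0 := by simp [erealPos]
lemma erealPos_coe (r : ℝ) : erealPos (r : EReal) = ENNReal.ofReal r := by
  simp [erealPos, EReal.coe_ne_top]

lemma erealPos_mono : Monotone erealPos := by
  intro x y hxy
  rcases eq_or_ne y ⊤ with rfl | hy
  · simp [erealPos_top]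
  · rcases eq_or_ne x ⊥ with rfl | hx
    · simp [erealPos_bot]
    · have hx' : x ≠ ⊤ := fun h => hy (top_le_iff.mp (h ▸ hxy))
      rcases eq_or_ne y ⊥ with rfl | hy'
      · exact absurd (le_bot_iff.mp hxy) hx
      · rw [← EReal.coe_toReal hx' hx, ← EReal.coe_toReal hy hy', erealPos_coe, erealPos_coe]
        exact ENNReal.ofReal_le_ofReal (EReal.toReal_le_toReal hxy hx hy)

lemma ofReal_max (t : ℝ) : ENNReal.ofReal t = ENNReal.ofReal (max t 0) := by
  rcases le_total t 0 with h | h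
  · simp [ENNReal.ofReal_eq_zero.2 h, max_eq_right h]
  · rw [max_eq_left h]

lemma erealPos_add_identity (x y : EReal) (hx : x ≠ ⊥) (hy : y ≠ ⊥) :
    erealPos (x + y) + erealPos (-x) + erealPos (-y)
      = erealPos x + erealPos y + erealPos (-(x + y)) := by
  rcases eq_or_ne x ⊤ with rfl | hx'
  · rw [EReal.top_add_of_ne_bot hy, erealPos_top]
    simp [top_add]
  rcases eq_or_ne y ⊤ with rfl | hy'
  · rw [EReal.add_top_of_ne_bot hx, erealPos_top]
    simp [top_add, add_top]
  · lift x to ℝ using ⟨hx', hx⟩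
    lift y to ℝ using ⟨hy', hy⟩
    rw [← EReal.coe_add, ← EReal.coe_neg, ← EReal.coe_neg, ← EReal.coe_neg,
      erealPos_coe, erealPos_coe, erealPos_coe, erealPos_coe, erealPos_coe, erealPos_coe]
    rw [ofReal_max (x+y), ofReal_max (-x), ofReal_max (-y), ofReal_max x, ofReal_max y,
      ofReal_max (-(x+y))]
    rw [← ENNReal.ofReal_add (le_max_right _ _) (le_max_right _ _),
      ← ENNReal.ofReal_add (add_nonneg (le_max_right _ _) (le_max_right _ _)) (le_max_right _ _),
      ← ENNReal.ofReal_add (le_max_right _ _) (le_max_right _ _),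
      ← ENNReal.ofReal_add (add_nonneg (le_max_right _ _) (le_max_right _ _)) (le_max_right _ _)]
    congr 1
    simp only [max_def]
    split_ifs <;> linarith

lemma sub_le_add_of_eq {p px py nn nx ny : ℝ≥0∞} (hn : nn ≠ ⊤) (hnx : nx ≠ ⊤) (hny : ny ≠ ⊤)
    (h : p + nx + ny = px + py + nn) :
    (p : EReal) - nn ≤ ((px : EReal) - nx) + ((py : EReal) - ny) := by
  rcases eq_or_ne px ⊤ with rfl | hpx
  · have h1 : ((⊤ : ℝ≥0∞) : EReal) - (nx : EReal) = ⊤ := by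
      rw [EReal.coe_ennreal_top]
      rw [sub_eq_add_neg, EReal.top_add_of_ne_bot]
      simp [EReal.neg_eq_bot_iff]
      exact fun hh => hnx (by exact_mod_cast hh)
    rw [h1]
    rw [EReal.top_add_of_ne_bot]
    · exact le_top
    · rw [sub_eq_add_neg]
      have h2 : -(ny:EReal) ≠ ⊥ := by
        simp [EReal.neg_eq_bot_iff]
        exact fun hh => hny (by exact_mod_cast hh)
      simp [EReal.add_eq_bot_iff, h2]
  rcases eq_or_ne py ⊤ with rfl | hpy
  · have h1 : ((⊤ : ℝ≥0∞) : EReal) - (ny : EReal) = ⊤ := by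
      rw [EReal.coe_ennreal_top]
      rw [sub_eq_add_neg, EReal.top_add_of_ne_bot]
      simp [EReal.neg_eq_bot_iff]
      exact fun hh => hny (by exact_mod_cast hh)
    rw [h1]
    rw [EReal.add_top_of_ne_bot]
    · exact le_top
    · rw [sub_eq_add_neg]
      have h2 : -(nx:EReal) ≠ ⊥ := by
        simp [EReal.neg_eq_bot_iff]
        exact fun hh => hnx (by exact_mod_cast hh)
      simp [EReal.add_eq_bot_iff, h2]
  · have hp : p ≠ ⊤ := by
      intro hp
      rw [hp] at h
      simp only [top_add] at h
      have h' := h.symm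
      rw [ENNReal.add_eq_top, ENNReal.add_eq_top] at h'
      tauto
    have key : p.toReal + nx.toReal + ny.toReal = px.toReal + py.toReal + nn.toReal := by
      have := congrArg ENNReal.toReal h
      rwa [ENNReal.toReal_add (by finiteness) hny, ENNReal.toReal_add hp hnx,
        ENNReal.toReal_add (by finiteness) hn, ENNReal.toReal_add hpx hpy] at this
    have cast1 : ∀ q : ℝ≥0∞, q ≠ ⊤ → (q : EReal) = ((q.toReal : ℝ) : EReal) := by
      intro q hq
      rw [show ((q.toReal : ℝ) : EReal) = (((q:EReal).toReal : ℝ) : EReal) by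
        rw [EReal.toReal_coe_ennreal]]
      rw [EReal.coe_toReal (by simp [hq]) (by simp)]
    rw [cast1 p hp, cast1 nn hn, cast1 px hpx, cast1 nx hnx, cast1 py hpy, cast1 ny hny,
      ← EReal.coe_sub, ← EReal.coe_sub, ← EReal.coe_sub, ← EReal.coe_add, EReal.coe_le_coe_iff]
    linarith

lemma measurable_comp_tuple {D C : Type} {n : ℕ} (a : Fin n → D) {β : Type*}
    [MeasurableSpace β] (h : (Fin n → C) → β) :
    @Measurable (D → C) β (fnBorel D C) _ (fun f => h (fun i => f (a i))) := by
  letI t1 : TopologicalSpace (D → C) := fnTop D C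
  letI tC : TopologicalSpace C := ⊥
  haveI : DiscreteTopology C := ⟨rfl⟩
  letI t2 : TopologicalSpace (Fin n → C) := Pi.topologicalSpace
  haveI : DiscreteTopology (Fin n → C) := Pi.discreteTopology
  letI m1 : MeasurableSpace (D → C) := fnBorel D C
  letI m2 : MeasurableSpace (Fin n → C) := borel _
  haveI b1 : BorelSpace (D → C) := ⟨rfl⟩
  haveI b2 : BorelSpace (Fin n → C) := ⟨rfl⟩
  have hc : Continuous (fun (f : D → C) => (fun i => f (a i))) :=
    continuous_pi (fun i => continuous_apply (a i))
  have hmeas : @Measurable (Fin n → C) β m2 _ h := by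
    have : m2 = ⊤ := borel_eq_top_of_discrete
    rw [this]
    exact measurable_from_top
  exact hmeas.comp hc.measurable

section EIntLemmas
variable {D C : Type} (ω : @Measure (D → C) (fnBorel D C))

lemma EInt_ge_const (hω : IsFracMap ω) (X : (D → C) → EReal) (c : EReal) (hc : c ≠ ⊥)
    (hX : ∀ f, c ≤ X f) : c ≤ EIntV ω X := by
  haveI : @IsProbabilityMeasure (D → C) (fnBorel D C) ω := hω
  have huniv : ω Set.univ = 1 := measure_univ
  rcases eq_or_ne c ⊤ with rfl | hc'
  · have hXt : ∀ f, X f = ⊤ := fun f => top_le_iff.mp (hX f)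
    have h1 : (fun f => erealPos (X f)) = fun _ => (⊤ : ℝ≥0∞) := by
      funext f; rw [hXt f, erealPos_top]
    have h2 : (fun f => erealPos (-X f)) = fun _ => (0 : ℝ≥0∞) := by
      funext f; rw [hXt f]; simp [erealPos_bot]
    rw [EIntV, h1, h2, lintegral_const, lintegral_const, huniv]
    simp
  · lift c to ℝ using ⟨hc', hc⟩
    have hP : ENNReal.ofReal c ≤ @MeasureTheory.lintegral _ (fnBorel D C) ω
        (fun f => erealPos (X f)) := by
      calc ENNReal.ofReal c = ENNReal.ofReal c * ω Set.univ := by rw [huniv, mul_one]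
      _ = @MeasureTheory.lintegral _ (fnBorel D C) ω (fun _ => ENNReal.ofReal c) :=
          (lintegral_const _).symm
      _ ≤ _ := lintegral_mono (fun f => by rw [← erealPos_coe]; exact erealPos_mono (hX f))
    have hN : @MeasureTheory.lintegral _ (fnBorel D C) ω (fun f => erealPos (-X f))
        ≤ ENNReal.ofReal (-c) := by
      calc _ ≤ @MeasureTheory.lintegral _ (fnBorel D C) ω (fun _ => ENNReal.ofReal (-c)) :=
          lintegral_mono (fun f => by
            rw [← erealPos_coe, EReal.coe_neg]
            exact erealPos_mono (EReal.neg_le_neg_iff.mpr (hX f)))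
      _ = ENNReal.ofReal (-c) * ω Set.univ := lintegral_const _
      _ = ENNReal.ofReal (-c) := by rw [huniv, mul_one]
    rw [EIntV]
    set P := @MeasureTheory.lintegral _ (fnBorel D C) ω (fun f => erealPos (X f))
    set N := @MeasureTheory.lintegral _ (fnBorel D C) ω (fun f => erealPos (-X f))
    calc (c : EReal) = ((max c 0 : ℝ) : EReal) - ((max (-c) 0 : ℝ) : EReal) := by
          rw [← EReal.coe_sub, EReal.coe_eq_coe_iff]
          rcases le_total c 0 with h | h
          · rw [max_eq_right h, max_eq_left (by linarith)]; ring
          · rw [max_eq_left h, max_eq_right (by linarith)]; ring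
      _ = ((ENNReal.ofReal c : ℝ≥0∞) : EReal) - ((ENNReal.ofReal (-c) : ℝ≥0∞) : EReal) := by
          rw [EReal.coe_ennreal_ofReal, EReal.coe_ennreal_ofReal]
      _ ≤ (P : EReal) - (N : EReal) := by
          rw [sub_eq_add_neg, sub_eq_add_neg]
          apply add_le_add
          · exact_mod_cast hP
          · exact EReal.neg_le_neg_iff.mpr (by exact_mod_cast hN)

lemma EInt_add_le (hω : IsFracMap ω) (X Y : (D → C) → EReal) (cx cy : ℝ)
    (hX : ∀ f, (cx : EReal) ≤ X f) (hY : ∀ f, (cy : EReal) ≤ Y f)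
    (mN : @Measurable _ _ (fnBorel D C) _ (fun f => erealPos (-X f)))
    (mPY : @Measurable _ _ (fnBorel D C) _ (fun f => erealPos (Y f)))
    (mNY : @Measurable _ _ (fnBorel D C) _ (fun f => erealPos (-Y f)))
    (mNXY : @Measurable _ _ (fnBorel D C) _ (fun f => erealPos (-(X f + Y f)))) :
    EIntV ω (fun f => X f + Y f) ≤ EIntV ω X + EIntV ω Y := by
  haveI : @IsProbabilityMeasure (D → C) (fnBorel D C) ω := hω
  have huniv : ω Set.univ = 1 := measure_univ
  have hXb : ∀ f, X f ≠ ⊥ := fun f h => by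
    have := hX f; rw [h, le_bot_iff] at this; exact EReal.coe_ne_bot _ this
  have hYb : ∀ f, Y f ≠ ⊥ := fun f h => by
    have := hY f; rw [h, le_bot_iff] at this; exact EReal.coe_ne_bot _ this
  have negbound : ∀ (Z : (D → C) → EReal) (c : ℝ), (∀ f, (c:EReal) ≤ Z f) →
      @MeasureTheory.lintegral _ (fnBorel D C) ω (fun f => erealPos (-Z f)) ≠ ⊤ := by
    intro Z c hZ h
    have : @MeasureTheory.lintegral _ (fnBorel D C) ω (fun f => erealPos (-Z f))
        ≤ ENNReal.ofReal (-c) := by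
      calc _ ≤ @MeasureTheory.lintegral _ (fnBorel D C) ω (fun _ => ENNReal.ofReal (-c)) :=
          lintegral_mono (fun f => by
            rw [← erealPos_coe, EReal.coe_neg]
            exact erealPos_mono (EReal.neg_le_neg_iff.mpr (hZ f)))
      _ = ENNReal.ofReal (-c) * ω Set.univ := lintegral_const _
      _ = ENNReal.ofReal (-c) := by rw [huniv, mul_one]
    rw [h] at this
    simp at this
  have hNX := negbound X cx hX
  have hNY := negbound Y cy hY
  have hNXY : @MeasureTheory.lintegral _ (fnBorel D C) ω
      (fun f => erealPos (-(X f + Y f))) ≠ ⊤ := by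
    apply negbound (fun f => X f + Y f) (cx + cy)
    intro f
    rw [EReal.coe_add]
    exact add_le_add (hX f) (hY f)
  have key : (@MeasureTheory.lintegral _ (fnBorel D C) ω (fun f => erealPos (X f + Y f)))
        + (@MeasureTheory.lintegral _ (fnBorel D C) ω (fun f => erealPos (-X f)))
        + (@MeasureTheory.lintegral _ (fnBorel D C) ω (fun f => erealPos (-Y f)))
      = (@MeasureTheory.lintegral _ (fnBorel D C) ω (fun f => erealPos (X f)))
        + (@MeasureTheory.lintegral _ (fnBorel D C) ω (fun f => erealPos (Y f)))
        + (@MeasureTheory.lintegral _ (fnBorel D C) ω (fun f => erealPos (-(X f + Y f)))) := by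
    have e1 : ∀ f : D → C, erealPos (X f + Y f) + erealPos (-X f) + erealPos (-Y f)
        = erealPos (X f) + erealPos (Y f) + erealPos (-(X f + Y f)) :=
      fun f => erealPos_add_identity (X f) (Y f) (hXb f) (hYb f)
    have lhs : @MeasureTheory.lintegral _ (fnBorel D C) ω
        (fun f => erealPos (X f + Y f) + erealPos (-X f) + erealPos (-Y f))
        = (@MeasureTheory.lintegral _ (fnBorel D C) ω (fun f => erealPos (X f + Y f)))
          + (@MeasureTheory.lintegral _ (fnBorel D C) ω (fun f => erealPos (-X f)))
          + (@MeasureTheory.lintegral _ (fnBorel D C) ω (fun f => erealPos (-Y f))) := by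
      rw [lintegral_add_right _ mNY, lintegral_add_right _ mN]
    have rhs : @MeasureTheory.lintegral _ (fnBorel D C) ω
        (fun f => erealPos (X f) + erealPos (Y f) + erealPos (-(X f + Y f)))
        = (@MeasureTheory.lintegral _ (fnBorel D C) ω (fun f => erealPos (X f)))
          + (@MeasureTheory.lintegral _ (fnBorel D C) ω (fun f => erealPos (Y f)))
          + (@MeasureTheory.lintegral _ (fnBorel D C) ω (fun f => erealPos (-(X f + Y f)))) := by
      rw [lintegral_add_right _ mNXY, lintegral_add_right _ mPY]
    rw [← lhs, ← rhs]
    exact lintegral_congr e1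
  rw [EIntV, EIntV, EIntV]
  exact sub_le_add_of_eq hNXY hNX hNY key

end EIntLemmas

section Structural
variable {τ : Signature} {C : Type}

lemma eval_auto {V : Type} (Γ : VStruct τ C) (φ : Expr τ V) {α : Equiv.Perm C}
    (hα : IsVAuto Γ α) (b : V → C) :
    Expr.eval Γ φ (fun v => α (b v)) = Expr.eval Γ φ b := by
  unfold Expr.eval
  congr 1
  apply List.map_congr_left
  intro t _
  exact hα t.sym (fun i => b (t.vars i))

lemma eval_range_finite {n : ℕ} (Γ : VStruct τ C) (hΓ : VOligo Γ) (φ : Expr τ (Fin n)) :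
    (Set.range (fun b : Fin n → C => Expr.eval Γ φ b)).Finite := by
  obtain ⟨F, hF, horb⟩ := hΓ n
  apply Set.Finite.subset (hF.image (fun b => Expr.eval Γ φ b))
  rintro _ ⟨b, rfl⟩
  obtain ⟨b₀, hb₀, α, hα, hab⟩ := horb b
  exact ⟨b₀, hb₀, by rw [← hab]; exact (eval_auto Γ φ hα b₀).symm⟩

lemma rel_range_finite (Γ : VStruct τ C) (hΓ : VOligo Γ) (s : τ.symbols) :
    (Set.range (Γ s)).Finite := by
  obtain ⟨F, hF, horb⟩ := hΓ (τ.arity s)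
  apply Set.Finite.subset (hF.image (Γ s))
  rintro _ ⟨b, rfl⟩
  obtain ⟨b₀, hb₀, α, hα, hab⟩ := horb b
  exact ⟨b₀, hb₀, by rw [← hab]; exact (hα s b₀).symm⟩

lemma exists_eq_iInf {A : Type} [Nonempty A] (f : A → EReal)
    (hf : (Set.range f).Finite) : ∃ a : A, f a = ⨅ x, f x := by
  obtain ⟨y, ⟨a, rfl⟩, hmin⟩ :=
    Set.exists_min_image (Set.range f) id hf (Set.range_nonempty f)
  refine ⟨a, le_antisymm ?_ (iInf_le f a)⟩
  exact le_iInf fun x => hmin (f x) ⟨x, rfl⟩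

lemma exists_real_lb {A : Type} (g : A → QInf)
    (hf : (Set.range (fun x => QInf.toE (g x))).Finite) :
    ∃ c : ℝ, ∀ x, (c : EReal) ≤ QInf.toE (g x) := by
  set S : Set EReal := insert 0 (Set.range (fun x => QInf.toE (g x))) with hS
  have hSfin : S.Finite := hf.insert 0
  obtain ⟨m, hmS, hmin⟩ := Set.exists_min_image S id hSfin ⟨0, Set.mem_insert _ _⟩
  have hm0 : m ≤ 0 := hmin 0 (Set.mem_insert _ _)
  have hmb : m ≠ ⊥ := by
    rcases hmS with h | ⟨x, rfl⟩
    · rw [h]; simp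
    · exact toE_ne_bot (g x)
  refine ⟨m.toReal, fun x => ?_⟩
  rw [EReal.coe_toReal (fun h => by simp [h] at hm0) hmb]
  exact hmin _ (Set.mem_insert_iff.mpr (Or.inr ⟨x, rfl⟩))

end Structural
end Aux
section Main
variable {τ : Signature} {C D : Type}

/-- Finite range of `toE ∘ g` from finite range of `g`. -/
lemma toE_range_finite {A : Type} (g : A → QInf) (hg : (Set.range g).Finite) :
    (Set.range (fun x => QInf.toE (g x))).Finite := by
  apply Set.Finite.subset (hg.image QInf.toE)
  rintro _ ⟨x, rfl⟩
  exact ⟨g x, ⟨x, rfl⟩, rfl⟩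

/-- The key inductive bound: the expected value of the expression under a fractional
homomorphism is at most the value of the expression in the source structure. -/
lemma EInt_eval_le [Nonempty C] (Γ : VStruct τ C) (Δ : VStruct τ D) (hΓ : VOligo Γ)
    (ω : @Measure (D → C) (fnBorel D C)) (hω : IsFracHom Δ Γ ω)
    {n : ℕ} (φ : Expr τ (Fin n)) (a : Fin n → D) :
    EIntV ω (fun f => QInf.toE (Expr.eval Γ φ (fun i => f (a i))))
      ≤ QInf.toE (Expr.eval Δ φ a) := by
  induction φ with
  | nil =>
    have h0 : ∀ b : Fin n → C, Expr.eval Γ ([] : Expr τ (Fin n)) b = 0 := fun _ => rfl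
    have h0' : Expr.eval Δ ([] : Expr τ (Fin n)) a = 0 := rfl
    rw [h0']
    have : (fun f : D → C => QInf.toE (Expr.eval Γ ([] : Expr τ (Fin n)) (fun i => f (a i))))
        = fun _ => (0 : EReal) := by
      funext f; rw [h0, toE_zero]
    rw [this, EIntV]
    have e0 : erealPos (0 : EReal) = 0 := by
      rw [show (0 : EReal) = ((0:ℝ):EReal) by norm_num, erealPos_coe]; simp
    simp only [neg_zero, e0, lintegral_const, zero_mul]
    rw [toE_zero]
    simp
  | cons t φ' ih =>
    -- decompose the evaluation
    have hdec : ∀ {E : Type} (Θ : VStruct τ E) (b : Fin n → E),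
        Expr.eval Θ (t :: φ') b = Θ t.sym (fun i => b (t.vars i)) + Expr.eval Θ φ' b := by
      intro E Θ b
      unfold Expr.eval
      rw [List.map_cons, List.sum_cons]
    set X : (D → C) → EReal := fun f => QInf.toE (Γ t.sym (fun i => f (a (t.vars i)))) with hXdef
    set Y : (D → C) → EReal :=
      fun f => QInf.toE (Expr.eval Γ φ' (fun i => f (a i))) with hYdef
    have hfun : (fun f : D → C => QInf.toE (Expr.eval Γ (t :: φ') (fun i => f (a i))))
        = fun f => X f + Y f := by
      funext f
      rw [hdec Γ, toE_add]
    rw [hfun, hdec Δ, toE_add]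
    -- lower bounds
    obtain ⟨cx, hcx⟩ := exists_real_lb (Γ t.sym)
      (toE_range_finite _ (rel_range_finite Γ hΓ t.sym))
    obtain ⟨cy, hcy⟩ := exists_real_lb (fun b : Fin n → C => Expr.eval Γ φ' b)
      (toE_range_finite _ (eval_range_finite Γ hΓ φ'))
    have hX : ∀ f, (cx : EReal) ≤ X f := fun f => hcx _
    have hY : ∀ f, (cy : EReal) ≤ Y f := fun f => hcy _
    -- measurability
    have mN : @Measurable _ _ (fnBorel D C) _ (fun f => erealPos (-X f)) :=
      measurable_comp_tuple a
        (fun c : Fin n → C => erealPos (-(QInf.toE (Γ t.sym (fun i => c (t.vars i))))))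
    have mPY : @Measurable _ _ (fnBorel D C) _ (fun f => erealPos (Y f)) :=
      measurable_comp_tuple a
        (fun c : Fin n → C => erealPos (QInf.toE (Expr.eval Γ φ' c)))
    have mNY : @Measurable _ _ (fnBorel D C) _ (fun f => erealPos (-Y f)) :=
      measurable_comp_tuple a
        (fun c : Fin n → C => erealPos (-(QInf.toE (Expr.eval Γ φ' c))))
    have mNXY : @Measurable _ _ (fnBorel D C) _ (fun f => erealPos (-(X f + Y f))) :=
      measurable_comp_tuple a
        (fun c : Fin n → C => erealPos (-(QInf.toE (Γ t.sym (fun i => c (t.vars i)))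
          + QInf.toE (Expr.eval Γ φ' c))))
    -- the atom bound
    have hatom := (hω.2 t.sym (fun i => a (t.vars i))).2
    calc EIntV ω (fun f => X f + Y f) ≤ EIntV ω X + EIntV ω Y :=
          EInt_add_le ω hω.1 X Y cx cy hX hY mN mPY mNY mNXY
      _ ≤ QInf.toE (Δ t.sym (fun i => a (t.vars i))) + QInf.toE (Expr.eval Δ φ' a) :=
          add_le_add hatom (ih)

end Main
/-- if `Γ` and `Δ` are valued `τ`-structures with countable domains and
oligomorphic automorphism groups that are fractionally homomorphically equivalent, then for
every `τ`-expression `φ` the costs with respect to `Γ` and `Δ` coincide, both costs are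
attained, and for every threshold `u ∈ ℚ` the instance `(φ,u)` has a solution with respect
to `Γ` iff it has one with respect to `Δ`. -/
theorem frac_hom_equiv_same_cost {τ : Signature} [Finite τ.symbols] {C D : Type}
    [Countable C] [Countable D] [Nonempty C] [Nonempty D]
    (Γ : VStruct τ C) (Δ : VStruct τ D)
    (hΓ : VOligo Γ) (hΔ : VOligo Δ)
    (ω₁ : @Measure (C → D) (fnBorel C D)) (hω₁ : IsFracHom Γ Δ ω₁)
    (ω₂ : @Measure (D → C) (fnBorel D C)) (hω₂ : IsFracHom Δ Γ ω₂)
    {n : ℕ} (φ : Expr τ (Fin n)) :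
    ((⨅ b : Fin n → C, QInf.toE (Expr.eval Γ φ b)) =
        ⨅ a : Fin n → D, QInf.toE (Expr.eval Δ φ a)) ∧
    (∃ b : Fin n → C,
        QInf.toE (Expr.eval Γ φ b) = ⨅ b' : Fin n → C, QInf.toE (Expr.eval Γ φ b')) ∧
    (∃ a : Fin n → D,
        QInf.toE (Expr.eval Δ φ a) = ⨅ a' : Fin n → D, QInf.toE (Expr.eval Δ φ a')) ∧
    ∀ u : ℚ, (∃ b : Fin n → C, Expr.eval Γ φ b ≤ (u : QInf)) ↔
        ∃ a : Fin n → D, Expr.eval Δ φ a ≤ (u : QInf) := by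
  have finΓ : (Set.range (fun b : Fin n → C => QInf.toE (Expr.eval Γ φ b))).Finite :=
    toE_range_finite _ (eval_range_finite Γ hΓ φ)
  have finΔ : (Set.range (fun a : Fin n → D => QInf.toE (Expr.eval Δ φ a))).Finite :=
    toE_range_finite _ (eval_range_finite Δ hΔ φ)
  obtain ⟨bΓ, hbΓ⟩ := exists_eq_iInf _ finΓ
  obtain ⟨aΔ, haΔ⟩ := exists_eq_iInf _ finΔ
  have le1 : (⨅ b : Fin n → C, QInf.toE (Expr.eval Γ φ b))
      ≤ ⨅ a : Fin n → D, QInf.toE (Expr.eval Δ φ a) := by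
    rw [← haΔ]
    refine le_trans ?_ (EInt_eval_le Γ Δ hΓ ω₂ hω₂ φ aΔ)
    refine EInt_ge_const ω₂ hω₂.1 _ _ ?_ ?_
    · rw [← hbΓ]; exact toE_ne_bot _
    · intro f
      exact iInf_le (fun b : Fin n → C => QInf.toE (Expr.eval Γ φ b)) (fun i => f (aΔ i))
  have le2 : (⨅ a : Fin n → D, QInf.toE (Expr.eval Δ φ a))
      ≤ ⨅ b : Fin n → C, QInf.toE (Expr.eval Γ φ b) := by
    rw [← hbΓ]
    refine le_trans ?_ (EInt_eval_le Δ Γ hΔ ω₁ hω₁ φ bΓ)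
    refine EInt_ge_const ω₁ hω₁.1 _ _ ?_ ?_
    · rw [← haΔ]; exact toE_ne_bot _
    · intro f
      exact iInf_le (fun a : Fin n → D => QInf.toE (Expr.eval Δ φ a)) (fun i => f (bΓ i))
  have heq := le_antisymm le1 le2
  refine ⟨heq, ⟨bΓ, hbΓ⟩, ⟨aΔ, haΔ⟩, ?_⟩
  intro u
  constructor
  · rintro ⟨b, hb⟩
    refine ⟨aΔ, ?_⟩
    rw [← toE_le_toE]
    calc QInf.toE (Expr.eval Δ φ aΔ)
        = ⨅ a : Fin n → D, QInf.toE (Expr.eval Δ φ a) := haΔ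
      _ = ⨅ b : Fin n → C, QInf.toE (Expr.eval Γ φ b) := heq.symm
      _ ≤ QInf.toE (Expr.eval Γ φ b) :=
          iInf_le (fun b : Fin n → C => QInf.toE (Expr.eval Γ φ b)) b
      _ ≤ QInf.toE (u : QInf) := toE_le_toE.mpr hb
  · rintro ⟨a, ha⟩
    refine ⟨bΓ, ?_⟩
    rw [← toE_le_toE]
    calc QInf.toE (Expr.eval Γ φ bΓ)
        = ⨅ b : Fin n → C, QInf.toE (Expr.eval Γ φ b) := hbΓ
      _ = ⨅ a : Fin n → D, QInf.toE (Expr.eval Δ φ a) := heq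
      _ ≤ QInf.toE (Expr.eval Δ φ a) :=
          iInf_le (fun a : Fin n → D => QInf.toE (Expr.eval Δ φ a)) a
      _ ≤ QInf.toE (u : QInf) := toE_le_toE.mpr ha
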